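/- Define the five pairs of vectors in ℝ³: (η₁¹, η₂¹) = ((1,0,0), (0,1,0)); (η₁², η₂²) = ((1,0,0), (0,0,1)); (η₁³, η₂³) = ((−4/5, 3/5, 0), (0,0,1)); (η₁⁴, η₂⁴) = ((−4/5, 0, 3/5), (0,1,0)); (η₁⁵, η₂⁵) = ((0, −4/5, 3/5), (1,0,0)). Then the five matrices Tᵢ = η₁ⁱ ⊗ η₁ⁱ − η₂ⁱ ⊗ η₂ⁱ (i = 1, …, 5) are linearly independent over ℝ and form a basis of the real vector space of symmetric traceless 3×3 real matrices. -/

import Mathlib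

open scoped BigOperators

/-- The five matrices `Tᵢ = η₁ⁱ ⊗ η₁ⁱ − η₂ⁱ ⊗ η₂ⁱ` built from the explicit pairs
`(η₁ⁱ, η₂ⁱ)` in the proof of the symmetric geometric lemma for traceless tensors. -/
noncomputable def T5 : Fin 5 → Matrix (Fin 3) (Fin 3) ℝ :=
  ![Matrix.vecMulVec ![1, 0, 0] ![1, 0, 0] - Matrix.vecMulVec ![0, 1, 0] ![0, 1, 0],
    Matrix.vecMulVec ![1, 0, 0] ![1, 0, 0] - Matrix.vecMulVec ![0, 0, 1] ![0, 0, 1],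
    Matrix.vecMulVec ![-4/5, 3/5, 0] ![-4/5, 3/5, 0] - Matrix.vecMulVec ![0, 0, 1] ![0, 0, 1],
    Matrix.vecMulVec ![-4/5, 0, 3/5] ![-4/5, 0, 3/5] - Matrix.vecMulVec ![0, 1, 0] ![0, 1, 0],
    Matrix.vecMulVec ![0, -4/5, 3/5] ![0, -4/5, 3/5] - Matrix.vecMulVec ![1, 0, 0] ![1, 0, 0]]

private lemma fin3_mk_two (h : 2 < 3) : (⟨2, h⟩ : Fin 3) = 2 := rfl

private lemma vmv_symm (v : Fin 3 → ℝ) : (Matrix.vecMulVec v v).IsSymm := by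
  ext i j
  simp [Matrix.vecMulVec_apply, mul_comm]

private lemma symm_sub {A B : Matrix (Fin 3) (Fin 3) ℝ} (hA : A.IsSymm) (hB : B.IsSymm) :
    (A - B).IsSymm := by
  unfold Matrix.IsSymm at *
  rw [Matrix.transpose_sub, hA, hB]

set_option maxHeartbeats 1600000 in
/-- The matrices `T₁, …, T₅` are linearly independent and form a basis of the space
of symmetric traceless `3×3` real matrices: each `Tᵢ` is symmetric and traceless, and
every symmetric traceless matrix lies in their span. -/
theorem T5_basis_of_sym_traceless :
    LinearIndependent ℝ T5 ∧
    (∀ i, (T5 i).IsSymm ∧ (T5 i).trace = 0) ∧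
    (∀ M : Matrix (Fin 3) (Fin 3) ℝ, M.IsSymm → M.trace = 0 →
      M ∈ Submodule.span ℝ (Set.range T5)) := by
  refine ⟨?_, ?_, ?_⟩
  · rw [Fintype.linearIndependent_iff]
    intro g hg
    have h := fun (k l : Fin 3) => congrFun (congrFun hg k) l
    have h00 := h 0 0
    have h11 := h 1 1
    have h01 := h 0 1
    have h02 := h 0 2
    have h12 := h 1 2
    norm_num [Fin.sum_univ_five, T5, Matrix.vecMulVec_apply, Matrix.sub_apply,
      Matrix.sum_apply, Matrix.smul_apply, Matrix.vecHead, Matrix.vecTail,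
      Matrix.cons_val_two, Matrix.cons_val_three, Matrix.cons_val_four]
      at h00 h11 h01 h02 h12
    intro i
    fin_cases i
    · show g 0 = 0; linarith
    · show g 1 = 0; linarith
    · show g 2 = 0; linarith
    · show g 3 = 0; linarith
    · show g 4 = 0; linarith
  · intro i
    refine ⟨?_, ?_⟩
    · fin_cases i <;> exact symm_sub (vmv_symm _) (vmv_symm _)
    · fin_cases i <;>
        norm_num [T5, Matrix.trace, Matrix.diag, Fin.sum_univ_three,
          Matrix.vecMulVec_apply, Matrix.sub_apply, Matrix.vecHead, Matrix.vecTail,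
          Matrix.cons_val_two, Matrix.cons_val_three, Matrix.cons_val_four]
  · intro M hs ht
    have hd : M 1 0 = M 0 1 := hs.apply 0 1
    have he : M 2 0 = M 0 2 := hs.apply 0 2
    have hf : M 2 1 = M 1 2 := hs.apply 1 2
    have htr : M 0 0 + M 1 1 + M 2 2 = 0 := by
      simpa [Matrix.trace, Matrix.diag, Fin.sum_univ_three] using ht
    rw [Submodule.mem_span_range_iff_exists_fun ℝ]
    set a := M 0 0 with ha
    set b := M 1 1 with hb
    set d := M 0 1 with hd'
    set e := M 0 2 with he'
    set f := M 1 2 with hf'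
    refine ⟨![9/25 * (-25*d/12) - (-25*e/12) + 16/25 * (-25*f/12) - b,
      a - (9/25 * (-25*d/12) - (-25*e/12) + 16/25 * (-25*f/12) - b)
        - 16/25 * (-25*d/12) - 16/25 * (-25*e/12) + (-25*f/12),
      -25*d/12, -25*e/12, -25*f/12], ?_⟩
    funext k l
    fin_cases k <;> fin_cases l <;>
      norm_num [Fin.mk_zero, Fin.mk_one, fin3_mk_two, Fin.sum_univ_five, T5,
        Matrix.vecMulVec_apply, Matrix.sub_apply, Matrix.sum_apply, Matrix.smul_apply,
        Matrix.vecHead, Matrix.vecTail, Matrix.cons_val_two, Matrix.cons_val_three,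
        Matrix.cons_val_four] <;>
      linarith
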